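/- Let f : ℝⁿ → ℝ ∪ {+∞} be a proper, lsc, convex symmetric function (invariant under permutations of coordinates), and let F := f ∘ λ on the space Sⁿ of n×n real symmetric matrices, where λ(A) is the vector of eigenvalues of A in non-increasing order. Then the Fenchel conjugate satisfies (f ∘ λ)* = f* ∘ λ, where the conjugate of F is taken with respect to the trace inner product ⟨X, Y⟩ = tr(XY) on Sⁿ. -/

import Mathlib

open Set Topology Filter Matrix

/-- The eigenvalues of a real symmetric matrix arranged in non-increasing order. -/
noncomputable def eigVec {n : ℕ} (A : Matrix (Fin n) (Fin n) ℝ) (hA : A.IsHermitian) :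
    Fin n → ℝ :=
  fun i => (hA.eigenvalues ∘ (Tuple.sort hA.eigenvalues)) i.rev

namespace Stmt9Aux
open Polynomial


noncomputable def dd {n : ℕ} (a : Fin n → ℝ) (k : Fin n) : ℝ :=
  a k - (if h : (k : ℕ) + 1 < n then a ⟨(k : ℕ) + 1, h⟩ else 0)

lemma dd_nonneg {n : ℕ} {a : Fin n → ℝ} (ha : Antitone a) (ha0 : ∀ i, 0 ≤ a i) (k : Fin n) :
    0 ≤ dd a k := by
  unfold dd
  split_ifs with h
  · have : a ⟨(k : ℕ) + 1, h⟩ ≤ a k := ha (by simp [Fin.le_def])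
    linarith
  · simpa using ha0 k

lemma telescope_Ico (g : ℕ → ℝ) {m n : ℕ} (h : m ≤ n) :
    ∑ k ∈ Finset.Ico m n, (g k - g (k + 1)) = g m - g n := by
  induction n, h using Nat.le_induction with
  | base => simp
  | succ n hmn ih => rw [Finset.sum_Ico_succ_top hmn, ih]; ring

lemma repr_dd {n : ℕ} (a : Fin n → ℝ) (i : Fin n) :
    a i = ∑ k : Fin n, if (i : ℕ) ≤ (k : ℕ) then dd a k else 0 := by
  set g : ℕ → ℝ := fun k => if h : k < n then a ⟨k, h⟩ else 0 with hg
  have hgd : ∀ k : Fin n, dd a k = g k - g ((k : ℕ) + 1) := by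
    intro k
    simp only [hg, dd, k.isLt, dif_pos]
  have : ∑ k : Fin n, (if (i : ℕ) ≤ (k : ℕ) then dd a k else 0)
      = ∑ k ∈ Finset.range n, (if (i : ℕ) ≤ k then g k - g (k + 1) else 0) := by
    rw [← Fin.sum_univ_eq_sum_range (fun m => if (i : ℕ) ≤ m then g m - g (m + 1) else 0) n]
    exact Finset.sum_congr rfl fun k _ => by rw [hgd k]
  rw [this, Finset.sum_ite, Finset.sum_const_zero, add_zero]
  have hfil : Finset.filter (fun k => (i : ℕ) ≤ k) (Finset.range n) = Finset.Ico (i : ℕ) n := by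
    ext k; simp [Finset.mem_Ico, Finset.mem_filter, Finset.mem_range]; omega
  rw [hfil, telescope_Ico g (le_of_lt i.isLt)]
  simp [hg, i.isLt]


variable {n : ℕ}

lemma swap4 (G : Fin n → Fin n → Fin n → Fin n → ℝ) :
    ∑ i : Fin n, ∑ j : Fin n, ∑ k : Fin n, ∑ l : Fin n, G i j k l
      = ∑ k : Fin n, ∑ l : Fin n, ∑ i : Fin n, ∑ j : Fin n, G i j k l := by
  have h1 : ∀ i, ∑ j : Fin n, ∑ k : Fin n, ∑ l : Fin n, G i j k l
      = ∑ k : Fin n, ∑ j : Fin n, ∑ l : Fin n, G i j k l := fun i => Finset.sum_comm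
  simp_rw [h1]
  rw [Finset.sum_comm]
  refine Finset.sum_congr rfl fun k _ => ?_
  have h2 : ∀ i, ∑ j : Fin n, ∑ l : Fin n, G i j k l
      = ∑ l : Fin n, ∑ j : Fin n, G i j k l := fun i => Finset.sum_comm
  simp_rw [h2]
  exact Finset.sum_comm

lemma swap3 (G : Fin n → Fin n → Fin n → ℝ) :
    ∑ i : Fin n, ∑ k : Fin n, ∑ l : Fin n, G i k l
      = ∑ k : Fin n, ∑ l : Fin n, ∑ i : Fin n, G i k l := by
  rw [Finset.sum_comm]
  exact Finset.sum_congr rfl fun k _ => Finset.sum_comm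

lemma core_nonneg (S : Matrix (Fin n) (Fin n) ℝ)
    (h0 : ∀ i j, 0 ≤ S i j) (hr : ∀ i, ∑ j, S i j = 1) (hc : ∀ j, ∑ i, S i j = 1)
    (a b : Fin n → ℝ) (ha : Antitone a) (hb : Antitone b)
    (ha0 : ∀ i, 0 ≤ a i) (hb0 : ∀ i, 0 ≤ b i) :
    ∑ i, ∑ j, S i j * (a i * b j) ≤ ∑ i, a i * b i := by
  classical
  set χ : Fin n → Fin n → ℝ := fun i k => if (i : ℕ) ≤ (k : ℕ) then (1:ℝ) else 0 with hχ
  have hχ01 : ∀ i k, χ i k = 0 ∨ χ i k = 1 := by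
    intro i k; rw [hχ]; dsimp only; split_ifs <;> simp
  set P : Fin n → Fin n → ℝ := fun k l => ∑ i : Fin n, ∑ j : Fin n, χ i k * χ j l * S i j with hP
  set Q : Fin n → Fin n → ℝ := fun k l => ∑ i : Fin n, χ i k * χ i l with hQ
  have hPQ : ∀ k l, P k l ≤ Q k l := by
    intro k l
    rcases le_total (k : ℕ) (l : ℕ) with h | h
    · have hQ' : Q k l = ∑ i : Fin n, χ i k := by
        refine Finset.sum_congr rfl fun i _ => ?_
        rw [hχ]; dsimp only; split_ifs with h1 h2 <;> first | ring1 | (exfalso; omega)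
      rw [hQ']
      calc P k l = ∑ i : Fin n, χ i k * ∑ j : Fin n, χ j l * S i j := by
            refine Finset.sum_congr rfl fun i _ => ?_
            rw [Finset.mul_sum]; exact Finset.sum_congr rfl fun j _ => by ring
        _ ≤ ∑ i : Fin n, χ i k * 1 := by
            refine Finset.sum_le_sum fun i _ => ?_
            rcases hχ01 i k with h1 | h1
            · simp [h1]
            · rw [h1, one_mul, one_mul]
              calc ∑ j : Fin n, χ j l * S i j ≤ ∑ j : Fin n, S i j := by
                    refine Finset.sum_le_sum fun j _ => ?_
                    rcases hχ01 j l with h2 | h2 <;> rw [h2] <;>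
                      [simpa using h0 i j; simp]
                _ = 1 := hr i
        _ = ∑ i : Fin n, χ i k := by simp
    · have hQ' : Q k l = ∑ i : Fin n, χ i l := by
        refine Finset.sum_congr rfl fun i _ => ?_
        rw [hχ]; dsimp only; split_ifs with h1 h2 <;> first | ring1 | (exfalso; omega)
      rw [hQ']
      calc P k l = ∑ j : Fin n, χ j l * ∑ i : Fin n, χ i k * S i j := by
            rw [hP]; dsimp only; rw [Finset.sum_comm]
            refine Finset.sum_congr rfl fun j _ => ?_
            rw [Finset.mul_sum]; exact Finset.sum_congr rfl fun i _ => by ring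
        _ ≤ ∑ j : Fin n, χ j l * 1 := by
            refine Finset.sum_le_sum fun j _ => ?_
            rcases hχ01 j l with h1 | h1
            · simp [h1]
            · rw [h1, one_mul, one_mul]
              calc ∑ i : Fin n, χ i k * S i j ≤ ∑ i : Fin n, S i j := by
                    refine Finset.sum_le_sum fun i _ => ?_
                    rcases hχ01 i k with h2 | h2 <;> rw [h2] <;>
                      [simpa using h0 i j; simp]
                _ = 1 := hc j
        _ = ∑ j : Fin n, χ j l := by simp
  have hrepr : ∀ (c : Fin n → ℝ) (i : Fin n), c i = ∑ k : Fin n, χ i k * dd c k := by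
    intro c i
    rw [repr_dd c i]
    refine Finset.sum_congr rfl fun k _ => ?_
    rw [hχ]; dsimp only; split_ifs <;> ring
  have hLHS : ∑ i, ∑ j, S i j * (a i * b j)
      = ∑ k : Fin n, ∑ l : Fin n, dd a k * dd b l * P k l := by
    calc ∑ i, ∑ j, S i j * (a i * b j)
        = ∑ i : Fin n, ∑ j : Fin n, ∑ k : Fin n, ∑ l : Fin n,
            dd a k * dd b l * (χ i k * χ j l * S i j) := by
          refine Finset.sum_congr rfl fun i _ => Finset.sum_congr rfl fun j _ => ?_
          rw [hrepr a i, hrepr b j, Finset.sum_mul_sum, Finset.mul_sum]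
          refine Finset.sum_congr rfl fun k _ => ?_
          rw [Finset.mul_sum]
          exact Finset.sum_congr rfl fun l _ => by ring
      _ = ∑ k : Fin n, ∑ l : Fin n, ∑ i : Fin n, ∑ j : Fin n,
            dd a k * dd b l * (χ i k * χ j l * S i j) := swap4 _
      _ = ∑ k : Fin n, ∑ l : Fin n, dd a k * dd b l * P k l := by
          refine Finset.sum_congr rfl fun k _ => Finset.sum_congr rfl fun l _ => ?_
          rw [hP]; dsimp only
          rw [Finset.mul_sum]
          refine Finset.sum_congr rfl fun i _ => ?_
          rw [Finset.mul_sum]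
  have hRHS : ∑ i, a i * b i = ∑ k : Fin n, ∑ l : Fin n, dd a k * dd b l * Q k l := by
    calc ∑ i, a i * b i
        = ∑ i : Fin n, ∑ k : Fin n, ∑ l : Fin n, dd a k * dd b l * (χ i k * χ i l) := by
          refine Finset.sum_congr rfl fun i _ => ?_
          rw [hrepr a i, hrepr b i, Finset.sum_mul_sum]
          refine Finset.sum_congr rfl fun k _ => ?_
          exact Finset.sum_congr rfl fun l _ => by ring
      _ = ∑ k : Fin n, ∑ l : Fin n, ∑ i : Fin n, dd a k * dd b l * (χ i k * χ i l) := swap3 _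
      _ = ∑ k : Fin n, ∑ l : Fin n, dd a k * dd b l * Q k l := by
          refine Finset.sum_congr rfl fun k _ => Finset.sum_congr rfl fun l _ => ?_
          rw [hQ]; dsimp only
          rw [Finset.mul_sum]
  rw [hLHS, hRHS]
  refine Finset.sum_le_sum fun k _ => Finset.sum_le_sum fun l _ => ?_
  exact mul_le_mul_of_nonneg_left (hPQ k l)
    (mul_nonneg (dd_nonneg ha ha0 k) (dd_nonneg hb hb0 l))

lemma core (S : Matrix (Fin n) (Fin n) ℝ)
    (h0 : ∀ i j, 0 ≤ S i j) (hr : ∀ i, ∑ j, S i j = 1) (hc : ∀ j, ∑ i, S i j = 1)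
    (a b : Fin n → ℝ) (ha : Antitone a) (hb : Antitone b) :
    ∑ i, ∑ j, S i j * (a i * b j) ≤ ∑ i, a i * b i := by
  rcases Nat.eq_zero_or_pos n with hn | hn
  · subst hn; simp
  · set i0 : Fin n := ⟨n - 1, by omega⟩ with hi0
    have hmax : ∀ i : Fin n, i ≤ i0 := fun i => by
      simp only [hi0, Fin.le_def]; omega
    set t := a i0 with ht
    set s := b i0 with hs
    set a' : Fin n → ℝ := fun i => a i - t with ha'
    set b' : Fin n → ℝ := fun i => b i - s with hb'
    have ha'anti : Antitone a' := fun i j hij => by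
      simp only [ha']; have := ha hij; linarith
    have hb'anti : Antitone b' := fun i j hij => by
      simp only [hb']; have := hb hij; linarith
    have ha'0 : ∀ i, 0 ≤ a' i := fun i => by
      simp only [ha']; have := ha (hmax i); linarith
    have hb'0 : ∀ i, 0 ≤ b' i := fun i => by
      simp only [hb']; have := hb (hmax i); linarith
    have key := core_nonneg S h0 hr hc a' b' ha'anti hb'anti ha'0 hb'0
    have hL : ∑ i, ∑ j, S i j * (a i * b j)
        = (∑ i, ∑ j, S i j * (a' i * b' j)) + t * (∑ j, b' j) + s * (∑ i, a' i)
          + t * s * n := by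
      have e1 : ∀ i j, S i j * (a i * b j)
          = S i j * (a' i * b' j) + (S i j * b' j) * t + (S i j * a' i) * s
            + S i j * (t * s) := by
        intro i j; simp only [ha', hb']; ring
      have c1 : ∑ i : Fin n, ∑ j : Fin n, S i j * b' j * t = t * ∑ j : Fin n, b' j := by
        rw [Finset.sum_comm]
        rw [Finset.mul_sum]
        refine Finset.sum_congr rfl fun j _ => ?_
        rw [← Finset.sum_mul, ← Finset.sum_mul, hc j]; ring
      have c2 : ∑ i : Fin n, ∑ j : Fin n, S i j * a' i * s = s * ∑ i : Fin n, a' i := by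
        rw [Finset.mul_sum]
        refine Finset.sum_congr rfl fun i _ => ?_
        rw [← Finset.sum_mul, ← Finset.sum_mul, hr i]; ring
      have c3 : ∑ i : Fin n, ∑ j : Fin n, S i j * (t * s) = t * s * n := by
        have : ∀ i : Fin n, ∑ j : Fin n, S i j * (t * s) = t * s :=
          fun i => by rw [← Finset.sum_mul, hr i, one_mul]
        simp_rw [this, Finset.sum_const, Finset.card_univ, Fintype.card_fin, nsmul_eq_mul]
        ring
      have hsplit : ∑ i, ∑ j, S i j * (a i * b j)
          = (∑ i : Fin n, ∑ j : Fin n, S i j * (a' i * b' j))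
            + (∑ i : Fin n, ∑ j : Fin n, S i j * b' j * t)
            + (∑ i : Fin n, ∑ j : Fin n, S i j * a' i * s)
            + (∑ i : Fin n, ∑ j : Fin n, S i j * (t * s)) := by
        rw [← Finset.sum_add_distrib, ← Finset.sum_add_distrib, ← Finset.sum_add_distrib]
        refine Finset.sum_congr rfl fun i _ => ?_
        rw [← Finset.sum_add_distrib, ← Finset.sum_add_distrib, ← Finset.sum_add_distrib]
        exact Finset.sum_congr rfl fun j _ => e1 i j
      rw [hsplit, c1, c2, c3]
    have hR : ∑ i, a i * b i
        = (∑ i, a' i * b' i) + t * (∑ j, b' j) + s * (∑ i, a' i) + t * s * n := by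
      have e1 : ∀ i, a i * b i = a' i * b' i + b' i * t + a' i * s + t * s := by
        intro i; simp only [ha', hb']; ring
      calc ∑ i, a i * b i = ∑ i : Fin n, (a' i * b' i + b' i * t + a' i * s + t * s) :=
            Finset.sum_congr rfl fun i _ => e1 i
        _ = (∑ i, a' i * b' i) + t * (∑ j, b' j) + s * (∑ i, a' i) + t * s * n := by
            rw [Finset.sum_add_distrib, Finset.sum_add_distrib, Finset.sum_add_distrib,
              Finset.sum_const, Finset.card_univ, Fintype.card_fin, nsmul_eq_mul,
              ← Finset.sum_mul, ← Finset.sum_mul]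
            ring
    rw [hL, hR]
    linarith



variable {n : ℕ}

lemma charpoly_conj (U B V : Matrix (Fin n) (Fin n) ℝ)
    (hUV : U * V = 1) (hVU : V * U = 1) : (U * B * V).charpoly = B.charpoly := by
  have hUV' : (C : ℝ →+* ℝ[X]).mapMatrix U * (C : ℝ →+* ℝ[X]).mapMatrix V = 1 := by
    rw [← _root_.map_mul, hUV, _root_.map_one]
  have hmapUBV : (C : ℝ →+* ℝ[X]).mapMatrix U * (C : ℝ →+* ℝ[X]).mapMatrix B
      * (C : ℝ →+* ℝ[X]).mapMatrix V = (C : ℝ →+* ℝ[X]).mapMatrix (U * B * V) := by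
    rw [← _root_.map_mul, ← _root_.map_mul]
  have hcomm : (C : ℝ →+* ℝ[X]).mapMatrix U * Matrix.scalar (Fin n) (X : ℝ[X])
      = Matrix.scalar (Fin n) (X : ℝ[X]) * (C : ℝ →+* ℝ[X]).mapMatrix U :=
    (Matrix.scalar_commute (X : ℝ[X]) (fun r => Commute.all _ _) _).symm.eq
  have hcm : charmatrix (U * B * V)
      = ((C : ℝ →+* ℝ[X]).mapMatrix U) * charmatrix B * ((C : ℝ →+* ℝ[X]).mapMatrix V) := by
    unfold charmatrix
    rw [mul_sub, sub_mul, hcomm, mul_assoc (Matrix.scalar (Fin n) (X : ℝ[X])), hUV', mul_one,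
      hmapUBV]
  rw [Matrix.charpoly, hcm, det_mul, det_mul,
    mul_comm (((C : ℝ →+* ℝ[X]).mapMatrix U).det), mul_assoc, ← det_mul, hUV', det_one, mul_one]
  rfl

lemma charpoly_diag (d : Fin n → ℝ) :
    (diagonal d).charpoly = ∏ i : Fin n, (X - C (d i)) := by
  rw [Matrix.charpoly_of_upperTriangular _ (Matrix.blockTriangular_diagonal d)]
  simp

lemma charpoly_hermitian {A : Matrix (Fin n) (Fin n) ℝ} (hA : A.IsHermitian) :
    A.charpoly = ∏ i : Fin n, (X - C (hA.eigenvalues i)) := by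
  have hst := hA.spectral_theorem
  have h1 : (hA.eigenvectorUnitary : Matrix (Fin n) (Fin n) ℝ)
      * (star hA.eigenvectorUnitary : Matrix (Fin n) (Fin n) ℝ) = 1 :=
    Matrix.mem_unitaryGroup_iff.mp hA.eigenvectorUnitary.2
  have h2 : (star hA.eigenvectorUnitary : Matrix (Fin n) (Fin n) ℝ)
      * (hA.eigenvectorUnitary : Matrix (Fin n) (Fin n) ℝ) = 1 :=
    Matrix.mem_unitaryGroup_iff'.mp hA.eigenvectorUnitary.2
  calc A.charpoly
      = ((hA.eigenvectorUnitary : Matrix (Fin n) (Fin n) ℝ)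
          * Matrix.diagonal (RCLike.ofReal ∘ hA.eigenvalues)
          * (star hA.eigenvectorUnitary : Matrix (Fin n) (Fin n) ℝ)).charpoly := by exact congrArg Matrix.charpoly hst
    _ = (Matrix.diagonal (RCLike.ofReal ∘ hA.eigenvalues)).charpoly := charpoly_conj _ _ _ h1 h2
    _ = ∏ i : Fin n, (X - C (hA.eigenvalues i)) := by
        rw [RCLike.ofReal_real_eq_id, Function.id_comp, charpoly_diag]

lemma multiset_eq_of_charpoly_eq {c e : Fin n → ℝ}
    (h : (∏ i : Fin n, (X - C (c i))) = ∏ i : Fin n, (X - C (e i))) :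
    Multiset.map c Finset.univ.val = Multiset.map e Finset.univ.val := by
  have key : ∀ g : Fin n → ℝ,
      ((Multiset.map g Finset.univ.val).map (fun a => X - C a)).prod
        = ∏ i : Fin n, (X - C (g i)) := by
    intro g
    rw [Multiset.map_map, Finset.prod_eq_multiset_prod]
    simp [Function.comp_def]
  have h2 : ((Multiset.map c Finset.univ.val).map (fun a => X - C a)).prod
      = ((Multiset.map e Finset.univ.val).map (fun a => X - C a)).prod := by
    rw [key c, key e]; exact h
  have h3 := congrArg Polynomial.roots h2
  rwa [roots_multiset_prod_X_sub_C, roots_multiset_prod_X_sub_C] at h3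

lemma perm_ofFn_of_map_eq {c e : Fin n → ℝ}
    (h : Multiset.map c Finset.univ.val = Multiset.map e Finset.univ.val) :
    (List.ofFn c).Perm (List.ofFn e) := by
  rw [← Multiset.coe_eq_coe]
  have hu : (Finset.univ.val : Multiset (Fin n)) = ↑(List.finRange n) := rfl
  rw [hu] at h
  simpa [List.ofFn_eq_map, Multiset.map_coe] using h

lemma mono_unique {g h : Fin n → ℝ} (hg : Monotone g) (hh : Monotone h)
    (hperm : (List.ofFn g).Perm (List.ofFn h)) : g = h :=
  List.ofFn_injective (List.Perm.eq_of_sortedLE hg.sortedLE_ofFn hh.sortedLE_ofFn hperm)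


lemma eigVec_antitone {A : Matrix (Fin n) (Fin n) ℝ} (hA : A.IsHermitian) :
    Antitone (eigVec A hA) := fun i j hij =>
  Tuple.monotone_sort hA.eigenvalues (Fin.rev_le_rev.mpr hij)

lemma spectral_real {A : Matrix (Fin n) (Fin n) ℝ} (hA : A.IsHermitian) :
    A = (hA.eigenvectorUnitary : Matrix (Fin n) (Fin n) ℝ) * diagonal hA.eigenvalues
      * (star hA.eigenvectorUnitary : Matrix (Fin n) (Fin n) ℝ) := by
  have := hA.spectral_theorem
  rwa [RCLike.ofReal_real_eq_id, Function.id_comp] at this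

lemma trace_bound {A Y : Matrix (Fin n) (Fin n) ℝ} (hA : A.IsHermitian) (hY : Y.IsHermitian) :
    ∃ S : Matrix (Fin n) (Fin n) ℝ, (∀ i j, 0 ≤ S i j) ∧ (∀ i, ∑ j, S i j = 1)
      ∧ (∀ j, ∑ i, S i j = 1)
      ∧ (A * Y).trace = ∑ k, ∑ l, S k l * (hA.eigenvalues k * hY.eigenvalues l) := by
  set U : Matrix (Fin n) (Fin n) ℝ := (hA.eigenvectorUnitary : Matrix (Fin n) (Fin n) ℝ) with hU
  set V : Matrix (Fin n) (Fin n) ℝ := (hY.eigenvectorUnitary : Matrix (Fin n) (Fin n) ℝ) with hV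
  set dA := hA.eigenvalues
  set dY := hY.eigenvalues
  have hUsU : U * star U = 1 := Matrix.mem_unitaryGroup_iff.mp hA.eigenvectorUnitary.2
  have hsUU : star U * U = 1 := Matrix.mem_unitaryGroup_iff'.mp hA.eigenvectorUnitary.2
  have hVsV : V * star V = 1 := Matrix.mem_unitaryGroup_iff.mp hY.eigenvectorUnitary.2
  have hsVV : star V * V = 1 := Matrix.mem_unitaryGroup_iff'.mp hY.eigenvectorUnitary.2
  set W : Matrix (Fin n) (Fin n) ℝ := star U * V with hW
  have hWsW : W * star W = 1 := by
    rw [hW, StarMul.star_mul, star_star]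
    calc star U * V * (star V * U) = star U * (V * star V) * U := by
          simp only [Matrix.mul_assoc]
      _ = 1 := by rw [hVsV, Matrix.mul_one, hsUU]
  have hsWW : star W * W = 1 := by
    rw [hW, StarMul.star_mul, star_star]
    calc star V * U * (star U * V) = star V * (U * star U) * V := by
          simp only [Matrix.mul_assoc]
      _ = 1 := by rw [hUsU, Matrix.mul_one, hsVV]
  have hWentry : ∀ l k, (star W) l k = W k l := by
    intro l k
    rw [Matrix.star_eq_conjTranspose, Matrix.conjTranspose_apply, star_trivial]
  refine ⟨fun k l => (W k l) ^ 2, fun k l => sq_nonneg _, ?_, ?_, ?_⟩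
  · intro k
    have h1 := congrFun (congrFun hWsW k) k
    rw [Matrix.mul_apply] at h1
    have h2 : (1 : Matrix (Fin n) (Fin n) ℝ) k k = 1 := Matrix.one_apply_eq k
    rw [h2] at h1
    rw [← h1]
    exact Finset.sum_congr rfl fun l _ => by rw [hWentry l k]; ring
  · intro l
    have h1 := congrFun (congrFun hsWW l) l
    rw [Matrix.mul_apply] at h1
    have h2 : (1 : Matrix (Fin n) (Fin n) ℝ) l l = 1 := Matrix.one_apply_eq l
    rw [h2] at h1
    rw [← h1]
    exact Finset.sum_congr rfl fun k _ => by rw [hWentry l k]; ring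
  · calc (A * Y).trace
        = (U * (diagonal dA * (star U * (V * (diagonal dY * star V))))).trace := by
          rw [spectral_real hA, spectral_real hY]
          simp only [Matrix.mul_assoc]
          rfl
      _ = ((diagonal dA * (star U * (V * (diagonal dY * star V)))) * U).trace :=
          Matrix.trace_mul_comm _ _
      _ = (diagonal dA * (W * (diagonal dY * star W))).trace := by
          rw [hW, StarMul.star_mul, star_star]
          simp only [Matrix.mul_assoc]
      _ = ∑ k, dA k * (W * (diagonal dY * star W)) k k := by
          rw [Matrix.trace]
          exact Finset.sum_congr rfl fun k _ => by rw [Matrix.diag_apply, Matrix.diagonal_mul]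
      _ = ∑ k, ∑ l, (W k l) ^ 2 * (dA k * dY l) := by
          refine Finset.sum_congr rfl fun k _ => ?_
          rw [Matrix.mul_apply, Finset.mul_sum]
          refine Finset.sum_congr rfl fun l _ => ?_
          rw [Matrix.diagonal_mul, hWentry l k]
          ring

lemma fan {A Y : Matrix (Fin n) (Fin n) ℝ} (hA : A.IsHermitian) (hY : Y.IsHermitian) :
    (A * Y).trace ≤ ∑ i, eigVec A hA i * eigVec Y hY i := by
  obtain ⟨S, h0, hr, hc, htr⟩ := trace_bound hA hY
  set ρA : Equiv.Perm (Fin n) := Fin.revPerm.trans (Tuple.sort hA.eigenvalues) with hρA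
  set ρY : Equiv.Perm (Fin n) := Fin.revPerm.trans (Tuple.sort hY.eigenvalues) with hρY
  have hea : ∀ i, eigVec A hA i = hA.eigenvalues (ρA i) := fun i => rfl
  have hey : ∀ i, eigVec Y hY i = hY.eigenvalues (ρY i) := fun i => rfl
  have hre : (A * Y).trace
      = ∑ i, ∑ j, S (ρA i) (ρY j) * (eigVec A hA i * eigVec Y hY j) := by
    rw [htr]
    rw [← Equiv.sum_comp ρA (fun k => ∑ l, S k l * (hA.eigenvalues k * hY.eigenvalues l))]
    refine Finset.sum_congr rfl fun i _ => ?_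
    rw [← Equiv.sum_comp ρY (fun l => S (ρA i) l * (hA.eigenvalues (ρA i) * hY.eigenvalues l))]
    exact Finset.sum_congr rfl fun j _ => by rw [hea, hey]
  rw [hre]
  exact core (fun i j => S (ρA i) (ρY j)) (fun i j => h0 _ _)
    (fun i => by rw [Equiv.sum_comp ρY (fun l => S (ρA i) l)]; exact hr _)
    (fun j => by rw [Equiv.sum_comp ρA (fun k => S k (ρY j))]; exact hc _)
    _ _ (eigVec_antitone hA) (eigVec_antitone hY)

lemma construct {Y : Matrix (Fin n) (Fin n) ℝ} (hY : Y.IsHermitian) (w : Fin n → ℝ) :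
    ∃ (A : Matrix (Fin n) (Fin n) ℝ) (hA : A.IsHermitian),
      (A * Y).trace = ∑ i, w i * hY.eigenvalues i
        ∧ (List.ofFn hA.eigenvalues).Perm (List.ofFn w) := by
  set V : Matrix (Fin n) (Fin n) ℝ := (hY.eigenvectorUnitary : Matrix (Fin n) (Fin n) ℝ) with hV
  have hVsV : V * star V = 1 := Matrix.mem_unitaryGroup_iff.mp hY.eigenvectorUnitary.2
  have hsVV : star V * V = 1 := Matrix.mem_unitaryGroup_iff'.mp hY.eigenvectorUnitary.2
  set dY := hY.eigenvalues
  refine ⟨V * diagonal w * star V, ?_, ?_, ?_⟩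
  · rw [Matrix.star_eq_conjTranspose]
    exact Matrix.isHermitian_mul_mul_conjTranspose V (Matrix.isHermitian_diagonal w)
  · calc (V * diagonal w * star V * Y).trace
        = (V * (diagonal w * (star V * (V * (diagonal dY * star V))))).trace := by
          rw [spectral_real hY]
          simp only [Matrix.mul_assoc]
          rfl
      _ = (V * (diagonal w * (diagonal dY * star V))).trace := by
          rw [← Matrix.mul_assoc (star V) V, hsVV, Matrix.one_mul]
      _ = ((diagonal w * (diagonal dY * star V)) * V).trace := Matrix.trace_mul_comm _ _
      _ = (diagonal w * diagonal dY).trace := by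
          simp only [Matrix.mul_assoc]
          rw [hsVV, Matrix.mul_one]
      _ = ∑ i, w i * dY i := by
          rw [Matrix.diagonal_mul_diagonal, Matrix.trace_diagonal]
  · apply perm_ofFn_of_map_eq
    apply multiset_eq_of_charpoly_eq
    rw [← charpoly_hermitian, charpoly_conj V (diagonal w) (star V) hVsV hsVV, charpoly_diag]


end Stmt9Aux

open Stmt9Aux in
theorem stmt9 (n : ℕ) (f : (Fin n → ℝ) → EReal)
    (hproper : ∃ z, f z ≠ ⊤) (hbot : ∀ z, f z ≠ ⊥)
    (hconv : ∀ x y : Fin n → ℝ, ∀ t : ℝ, 0 ≤ t → t ≤ 1 →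
      f (t • x + (1 - t) • y) ≤ ((t : ℝ) : EReal) * f x + (((1 - t : ℝ)) : EReal) * f y)
    (hlsc : LowerSemicontinuous f)
    (hsymm : ∀ σ : Equiv.Perm (Fin n), ∀ x : Fin n → ℝ, f (x ∘ σ) = f x)
    (Y : Matrix (Fin n) (Fin n) ℝ) (hY : Y.IsHermitian) :
    (⨆ (A : Matrix (Fin n) (Fin n) ℝ) (hA : A.IsHermitian),
        ((((A * Y).trace : ℝ) : EReal) - f (eigVec A hA))) =
      ⨆ y : Fin n → ℝ, (((∑ i, y i * eigVec Y hY i : ℝ) : EReal) - f y) := by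
  apply le_antisymm
  · refine iSup_le fun A => iSup_le fun hA => ?_
    have h1 : ((((A * Y).trace : ℝ) : EReal))
        ≤ ((∑ i, eigVec A hA i * eigVec Y hY i : ℝ) : EReal) :=
      EReal.coe_le_coe_iff.mpr (fan hA hY)
    refine le_trans (EReal.sub_le_sub h1 le_rfl) ?_
    exact le_iSup (fun y : Fin n → ℝ =>
      (((∑ i, y i * eigVec Y hY i : ℝ) : EReal) - f y)) (eigVec A hA)
  · refine iSup_le fun y => ?_
    set ρY : Equiv.Perm (Fin n) := Fin.revPerm.trans (Tuple.sort hY.eigenvalues) with hρY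
    obtain ⟨A, hA, htr, hperm⟩ := construct hY (y ∘ ρY.symm)
    have htr' : (A * Y).trace = ∑ i, y i * eigVec Y hY i := by
      rw [htr, ← Equiv.sum_comp ρY (fun i => (y ∘ ρY.symm) i * hY.eigenvalues i)]
      refine Finset.sum_congr rfl fun i _ => ?_
      simp only [Function.comp_apply, Equiv.symm_apply_apply]
      rfl
    have hf : f (eigVec A hA) = f y := by
      have hmono1 : Monotone (hA.eigenvalues ∘ Tuple.sort hA.eigenvalues) :=
        Tuple.monotone_sort _
      have hmono2 : Monotone (y ∘ Tuple.sort y) := Tuple.monotone_sort _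
      have hperm2 : (List.ofFn (hA.eigenvalues ∘ Tuple.sort hA.eigenvalues)).Perm
          (List.ofFn (y ∘ Tuple.sort y)) := by
        refine ((Tuple.sort hA.eigenvalues).ofFn_comp_perm hA.eigenvalues).trans
          (hperm.trans ?_)
        exact (Equiv.Perm.ofFn_comp_perm ρY.symm y).trans ((Tuple.sort y).ofFn_comp_perm y).symm
      have hgh := mono_unique hmono1 hmono2 hperm2
      have heq : eigVec A hA = y ∘ (Fin.revPerm.trans (Tuple.sort y)) := by
        funext i
        have h0 : eigVec A hA i = (hA.eigenvalues ∘ Tuple.sort hA.eigenvalues) i.rev := rfl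
        rw [h0, hgh]
        rfl
      rw [heq, hsymm]
    have hterm : (((∑ i, y i * eigVec Y hY i : ℝ) : EReal) - f y)
        = ((((A * Y).trace : ℝ) : EReal) - f (eigVec A hA)) := by rw [htr', hf]
    rw [hterm]
    refine le_trans (le_iSup (fun hA' : A.IsHermitian =>
      ((((A * Y).trace : ℝ) : EReal) - f (eigVec A hA'))) hA) ?_
    exact le_iSup (fun A' : Matrix (Fin n) (Fin n) ℝ =>
      ⨆ hA' : A'.IsHermitian, ((((A' * Y).trace : ℝ) : EReal) - f (eigVec A' hA'))) A
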